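/- Let c ∈ ℝ, m := √(λ+ν²), φ(u) := −(2B/ε)u + c, and let F = (F₁,F₂,F₃,F₄) : ℝ → ℝ⁴ be a differentiable map satisfying the first-order linear system: F₁′ = m(−ε⁻¹λ m F₂ + ν cos φ · F₄ + ν sin φ · F₃), F₂′ = m(ε⁻¹λ m F₁ + ν cos φ · F₃ − ν sin φ · F₄), F₃′ = −m(ε⁻¹λ m F₄ + ν cos φ · F₂ + ν sin φ · F₁), F₄′ = m(ε⁻¹λ m F₃ − ν cos φ · F₁ + ν sin φ · F₂). Then the Euclidean norm ⟨F(u), F(u)⟩ is constant in u and ⟨F′(u), F′(u)⟩ = ã·⟨F(u), F(u)⟩ for all u, where ã := λB(λ+ν²)/ε². -/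

import Mathlib

open Real

/-- for a solution `F` of the first-order system `∂F/∂u = T`, the
Euclidean norm `⟨F,F⟩` is constant and `⟨F′,F′⟩ = ã⟨F,F⟩` with
`ã = λB(λ+ν²)/ε²`. -/
theorem stmt7 (ε lam ν B : ℝ) (hε : 0 < ε)
    (hcase : (lam = -1 ∧ 1 < ν ^ 2) ∨ (lam = 1 ∧ ν ≠ 0))
    (hB : B = 1 + lam * ν ^ 2 * (1 + ε ^ 2))
    (c m : ℝ) (hm : m = Real.sqrt (lam + ν ^ 2))
    (φ : ℝ → ℝ) (hφ : ∀ u, φ u = -(2 * B / ε) * u + c)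
    (F1 F2 F3 F4 : ℝ → ℝ)
    (h1 : ∀ u, HasDerivAt F1
      (m * (-(ε⁻¹ * lam * m * F2 u) + ν * cos (φ u) * F4 u + ν * sin (φ u) * F3 u)) u)
    (h2 : ∀ u, HasDerivAt F2
      (m * (ε⁻¹ * lam * m * F1 u + ν * cos (φ u) * F3 u - ν * sin (φ u) * F4 u)) u)
    (h3 : ∀ u, HasDerivAt F3
      (-(m * (ε⁻¹ * lam * m * F4 u + ν * cos (φ u) * F2 u + ν * sin (φ u) * F1 u))) u)
    (h4 : ∀ u, HasDerivAt F4
      (m * (ε⁻¹ * lam * m * F3 u - ν * cos (φ u) * F1 u + ν * sin (φ u) * F2 u)) u) :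
    (∀ u : ℝ, F1 u ^ 2 + F2 u ^ 2 + F3 u ^ 2 + F4 u ^ 2
        = F1 0 ^ 2 + F2 0 ^ 2 + F3 0 ^ 2 + F4 0 ^ 2) ∧
    (∀ u : ℝ, (deriv F1 u) ^ 2 + (deriv F2 u) ^ 2 + (deriv F3 u) ^ 2 + (deriv F4 u) ^ 2
        = (lam * B * (lam + ν ^ 2) / ε ^ 2)
          * (F1 u ^ 2 + F2 u ^ 2 + F3 u ^ 2 + F4 u ^ 2)) := by

  have hl2 : lam ^ 2 = 1 := by
    rcases hcase with ⟨h, _⟩ | ⟨h, _⟩ <;> rw [h] <;> norm_num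
  have hpos : (0:ℝ) ≤ lam + ν ^ 2 := by
    rcases hcase with ⟨h, h2⟩ | ⟨h, h2⟩
    · rw [h]; nlinarith
    · rw [h]; positivity
  have hm2 : m ^ 2 = lam + ν ^ 2 := by
    rw [hm, sq_sqrt hpos]
  have hε' : ε ≠ 0 := ne_of_gt hε
  have hN : ∀ u, HasDerivAt (fun u => F1 u ^ 2 + F2 u ^ 2 + F3 u ^ 2 + F4 u ^ 2) 0 u := by
    intro u
    have := ((((h1 u).pow 2).add ((h2 u).pow 2)).add ((h3 u).pow 2)).add ((h4 u).pow 2)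
    convert (show HasDerivAt (fun u => F1 u ^ 2 + F2 u ^ 2 + F3 u ^ 2 + F4 u ^ 2) _ u from this) using 1
    ring
  constructor
  · intro u
    exact is_const_of_deriv_eq_zero (fun x => (hN x).differentiableAt)
      (fun x => (hN x).deriv) u 0
  · intro u
    rw [(h1 u).deriv, (h2 u).deriv, (h3 u).deriv, (h4 u).deriv]
    have hs : sin (φ u) ^ 2 + cos (φ u) ^ 2 = 1 := sin_sq_add_cos_sq (φ u)
    field_simp
    linear_combination
      (m ^ 2 * (F1 u ^ 2 + F2 u ^ 2 + F3 u ^ 2 + F4 u ^ 2) * m ^ 2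
        - ν ^ 2 * (1 + ε ^ 2) * (lam + ν ^ 2) * (F1 u ^ 2 + F2 u ^ 2 + F3 u ^ 2 + F4 u ^ 2)) * hl2
      + (m ^ 2 * (F1 u ^ 2 + F2 u ^ 2 + F3 u ^ 2 + F4 u ^ 2) * ν ^ 2 * ε ^ 2) * hs
      - lam * (lam + ν ^ 2) * (F1 u ^ 2 + F2 u ^ 2 + F3 u ^ 2 + F4 u ^ 2) * hB
      + (F1 u ^ 2 + F2 u ^ 2 + F3 u ^ 2 + F4 u ^ 2)
          * (m ^ 2 + lam + ν ^ 2 + ν ^ 2 * ε ^ 2) * hm2
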